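/- For fixed a,b ≥ 0 there exists a constant C such that for all real x ≥ 1, |Γ(x+a)/Γ(x+b) − x^{a−b}| ≤ C·x^{a−b−1}. -/

import Mathlib

open Real

lemma wendel_upper {y s : ℝ} (hy : 0 < y) (hs0 : 0 ≤ s) (hs1 : s ≤ 1) :
    Real.Gamma (y + s) ≤ Real.Gamma y * y ^ s := by
  have Gpos := Real.Gamma_pos_of_pos hy
  rcases hs0.eq_or_lt with rfl | hs0'
  · simp
  rcases hs1.eq_or_lt with rfl | hs1'
  · rw [Real.Gamma_add_one hy.ne', Real.rpow_one, mul_comm]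
  have key := Real.Gamma_mul_add_mul_le_rpow_Gamma_mul_rpow_Gamma (s := y) (t := y + 1)
    (a := 1 - s) (b := s) hy (by linarith) (by linarith) hs0' (by ring)
  have harg : (1 - s) * y + s * (y + 1) = y + s := by ring
  rw [harg, Real.Gamma_add_one hy.ne'] at key
  calc Real.Gamma (y + s) ≤ Real.Gamma y ^ (1 - s) * (y * Real.Gamma y) ^ s := key
    _ = Real.Gamma y * y ^ s := by
        rw [Real.mul_rpow hy.le Gpos.le, mul_comm (y ^ s), ← mul_assoc,
          ← Real.rpow_add Gpos, sub_add_cancel, Real.rpow_one]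

lemma wendel_lower {y s : ℝ} (hy : 0 < y) (hs0 : 0 ≤ s) (hs1 : s ≤ 1) :
    y * Real.Gamma y ≤ Real.Gamma (y + s) * (y + s) ^ (1 - s) := by
  have hys : (0 : ℝ) < y + s := by linarith
  have Gpos := Real.Gamma_pos_of_pos hys
  rcases hs0.eq_or_lt with rfl | hs0'
  · simp [Real.rpow_one, mul_comm]
  rcases hs1.eq_or_lt with rfl | hs1'
  · rw [sub_self, Real.rpow_zero, mul_one, Real.Gamma_add_one hy.ne']
  have key := Real.Gamma_mul_add_mul_le_rpow_Gamma_mul_rpow_Gamma (s := y + s) (t := y + s + 1)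
    (a := s) (b := 1 - s) hys (by linarith) hs0' (by linarith) (by ring)
  have harg : s * (y + s) + (1 - s) * (y + s + 1) = y + 1 := by ring
  rw [harg, Real.Gamma_add_one hy.ne', Real.Gamma_add_one hys.ne'] at key
  calc y * Real.Gamma y ≤ Real.Gamma (y + s) ^ s * ((y + s) * Real.Gamma (y + s)) ^ (1 - s) := key
    _ = Real.Gamma (y + s) * (y + s) ^ (1 - s) := by
        rw [Real.mul_rpow hys.le Gpos.le, mul_comm ((y + s) ^ (1 - s)), ← mul_assoc,
          ← Real.rpow_add Gpos, add_sub_cancel, Real.rpow_one]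

lemma gamma_add_nat {y : ℝ} (hy : 0 < y) (n : ℕ) :
    Real.Gamma (y + n) = Real.Gamma y * ∏ k ∈ Finset.range n, (y + k) := by
  induction n with
  | zero => simp
  | succ n ih =>
      have hyn : (0 : ℝ) < y + n := by positivity
      have : y + (n + 1 : ℕ) = (y + n) + 1 := by push_cast; ring
      rw [this, Real.Gamma_add_one hyn.ne', ih, Finset.prod_range_succ]
      ring

lemma pow_aux (c : ℝ) (hc : 0 ≤ c) (n : ℕ) : ∀ y : ℝ, 1 ≤ y →
    y * (y + c) ^ n ≤ y ^ (n + 1) + n * c * (1 + c) ^ n * y ^ n := by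
  induction n with
  | zero => intro y hy; simp
  | succ n ih =>
      intro y hy
      have hy0 : (0 : ℝ) < y := by linarith
      have h1 : y * (y + c) ^ (n + 1) = (y * (y + c) ^ n) * (y + c) := by ring
      have h2 := ih y hy
      have hK : (1 : ℝ) ≤ (1 + c) ^ n := one_le_pow₀ (by linarith)
      have hK0 : (0 : ℝ) ≤ (1 + c) ^ n := by positivity
      have hyn : (0:ℝ) ≤ y ^ n := by positivity
      have hyc : (0 : ℝ) ≤ y + c := by linarith
      have e1 : (y + c) ^ (n + 1) = (y + c) ^ n * (y + c) := pow_succ _ _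
      have e2 : y ^ (n + 1 + 1) = y ^ n * y * y := by ring
      have e3 : y ^ (n + 1) = y ^ n * y := pow_succ _ _
      have e4 : (1 + c) ^ (n + 1) = (1 + c) ^ n * (1 + c) := pow_succ _ _
      rw [e1, e2, e4, e3]
      rw [e3] at h2
      push_cast
      nlinarith [mul_le_mul_of_nonneg_right h2 hyc,
        mul_nonneg (mul_nonneg (mul_nonneg hc hyn) hy0.le) (sub_nonneg.2 hK),
        mul_nonneg (mul_nonneg (mul_nonneg (mul_nonneg (Nat.cast_nonneg (α := ℝ) n) (mul_nonneg hc hc)) hK0) hyn) (sub_nonneg.2 hy),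
        mul_nonneg (mul_nonneg (mul_nonneg (mul_nonneg hc hc) hK0) hyn) hy0.le]

lemma gamma_shift_bound (c : ℝ) (hc : 0 ≤ c) :
    ∃ K : ℝ, 0 ≤ K ∧ ∀ y : ℝ, 1 ≤ y →
      |Real.Gamma (y + c) - Real.Gamma y * y ^ c| ≤ K * (Real.Gamma y * y ^ (c - 1)) ∧
      Real.Gamma y * y ^ c / 2 ≤ Real.Gamma (y + c) := by
  set n := ⌊c⌋₊ with hn
  set s := c - n with hsdef
  have hs0 : 0 ≤ s := sub_nonneg.2 (Nat.floor_le hc)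
  have hs1 : s < 1 := by
    have := Nat.lt_floor_add_one c
    rw [hsdef]; linarith
  refine ⟨(n : ℝ) * c * (1 + c) ^ n + c, by positivity, fun y hy => ?_⟩
  have hy0 : (0 : ℝ) < y := lt_of_lt_of_le one_pos hy
  have Gpos := Real.Gamma_pos_of_pos hy0
  have hys : (0 : ℝ) < y + s := by linarith
  have hcs : c = s + n := by rw [hsdef]; ring
  have hprod : Real.Gamma (y + c) = Real.Gamma (y + s) * ∏ k ∈ Finset.range n, (y + s + k) := by
    have : y + c = (y + s) + n := by rw [hcs]; ring
    rw [this, gamma_add_nat hys n]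
  -- rpow identities
  have i3 : y ^ (c - 1) * y = y ^ c := by
    rw [Real.rpow_sub hy0, Real.rpow_one, div_mul_cancel₀ _ hy0.ne']
  have i4 : y ^ c * y = y ^ (c + 1) := by
    rw [Real.rpow_add hy0, Real.rpow_one]
  have i1 : y ^ s * y ^ (n + 1) = y ^ (c + 1) := by
    rw [← Real.rpow_natCast y (n + 1), ← Real.rpow_add hy0]
    congr 1; push_cast; rw [hcs]; ring
  have i2 : y ^ s * y ^ (n : ℕ) = y ^ c := by
    rw [← Real.rpow_natCast y n, ← Real.rpow_add hy0]
    congr 1; rw [hcs]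
  -- product bounds
  have hPnn : (0 : ℝ) ≤ ∏ k ∈ Finset.range n, (y + s + k) :=
    Finset.prod_nonneg fun k _ => by positivity
  have hPu : ∏ k ∈ Finset.range n, (y + s + k) ≤ (y + c) ^ n := by
    calc ∏ k ∈ Finset.range n, (y + s + (k : ℝ))
        ≤ ∏ _k ∈ Finset.range n, (y + c) := by
          refine Finset.prod_le_prod (fun k _ => by positivity) (fun k hk => ?_)
          have hk' : (k : ℝ) + 1 ≤ (n : ℝ) := by exact_mod_cast Finset.mem_range.1 hk
          rw [hcs]; linarith
      _ = (y + c) ^ n := by rw [Finset.prod_const, Finset.card_range]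
  have hPl : y ^ n ≤ ∏ k ∈ Finset.range n, (y + s + k) := by
    calc y ^ n = ∏ _k ∈ Finset.range n, y := by rw [Finset.prod_const, Finset.card_range]
      _ ≤ _ := Finset.prod_le_prod (fun k _ => hy0.le)
          (fun k _ => by have : (0:ℝ) ≤ (k:ℝ) := Nat.cast_nonneg k; linarith)
  -- upper bound
  have hupper : Real.Gamma (y + c) - Real.Gamma y * y ^ c
      ≤ ((n : ℝ) * c * (1 + c) ^ n) * (Real.Gamma y * y ^ (c - 1)) := by
    have h1 : Real.Gamma (y + c) ≤ Real.Gamma y * y ^ s * (y + c) ^ n := by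
      rw [hprod]
      exact mul_le_mul (wendel_upper hy0 hs0 hs1.le) hPu hPnn (by positivity)
    have h2 : Real.Gamma y * y ^ s * (y + c) ^ n
        ≤ Real.Gamma y * y ^ c + ((n : ℝ) * c * (1 + c) ^ n) * (Real.Gamma y * y ^ (c - 1)) := by
      apply le_of_mul_le_mul_right ?_ hy0
      have h3 := pow_aux c hc n y hy
      calc Real.Gamma y * y ^ s * (y + c) ^ n * y
          = Real.Gamma y * y ^ s * (y * (y + c) ^ n) := by ring
        _ ≤ Real.Gamma y * y ^ s * (y ^ (n + 1) + (n : ℝ) * c * (1 + c) ^ n * y ^ n) := by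
            apply mul_le_mul_of_nonneg_left h3 (by positivity)
        _ = Real.Gamma y * (y ^ s * y ^ (n + 1))
            + ((n : ℝ) * c * (1 + c) ^ n) * (Real.Gamma y * (y ^ s * y ^ (n : ℕ))) := by ring
        _ = Real.Gamma y * y ^ (c + 1)
            + ((n : ℝ) * c * (1 + c) ^ n) * (Real.Gamma y * y ^ c) := by rw [i1, i2]
        _ = (Real.Gamma y * y ^ c + (n : ℝ) * c * (1 + c) ^ n * (Real.Gamma y * y ^ (c - 1))) * y := by
            rw [← i4, ← i3]; ring
    linarith
  -- lower bound machinery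
  have hT : (0 : ℝ) < (y + s) ^ (1 - s) * y ^ s := by positivity
  have hT2 : (y + s) ^ (1 - s) * y ^ s ≤ y + s := by
    calc (y + s) ^ (1 - s) * y ^ s ≤ (y + s) ^ (1 - s) * (y + s) ^ s := by
          apply mul_le_mul_of_nonneg_left (Real.rpow_le_rpow hy0.le (by linarith) hs0)
            (by positivity)
      _ = y + s := by rw [← Real.rpow_add hys]; norm_num
  have hE : Real.Gamma y * y ^ (c + 1) ≤ Real.Gamma (y + c) * ((y + s) ^ (1 - s) * y ^ s) := by
    have w := wendel_lower hy0 hs0 hs1.le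
    have h1 : Real.Gamma (y + s) * y ^ n * ((y + s) ^ (1 - s) * y ^ s)
        ≤ Real.Gamma (y + c) * ((y + s) ^ (1 - s) * y ^ s) := by
      apply mul_le_mul_of_nonneg_right ?_ hT.le
      rw [hprod]
      exact mul_le_mul_of_nonneg_left hPl (Real.Gamma_pos_of_pos hys).le
    calc Real.Gamma y * y ^ (c + 1) = (y * Real.Gamma y) * (y ^ s * y ^ (n : ℕ)) := by
          rw [i2, ← i4]; ring
      _ ≤ (Real.Gamma (y + s) * (y + s) ^ (1 - s)) * (y ^ s * y ^ (n : ℕ)) := by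
          apply mul_le_mul_of_nonneg_right w (by positivity)
      _ = Real.Gamma (y + s) * y ^ n * ((y + s) ^ (1 - s) * y ^ s) := by ring
      _ ≤ _ := h1
  have hlow1 : Real.Gamma y * y ^ c - Real.Gamma (y + c) ≤ c * (Real.Gamma y * y ^ (c - 1)) := by
    have key : Real.Gamma y * (y ^ c - s * y ^ (c - 1)) ≤ Real.Gamma (y + c) := by
      apply le_of_mul_le_mul_right ?_ hT
      calc Real.Gamma y * (y ^ c - s * y ^ (c - 1)) * ((y + s) ^ (1 - s) * y ^ s)
          ≤ Real.Gamma y * (y ^ c - s * y ^ (c - 1)) * (y + s) := by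
            apply mul_le_mul_of_nonneg_left hT2
            have : s * y ^ (c - 1) ≤ y ^ c := by
              rw [← i3]; nlinarith [Real.rpow_pos_of_pos hy0 (c - 1)]
            nlinarith
        _ = Real.Gamma y * (y ^ (c - 1) * (y - s)) * (y + s) := by rw [← i3]; ring
        _ = Real.Gamma y * y ^ (c - 1) * (y * y - s * s) := by ring
        _ ≤ Real.Gamma y * y ^ (c - 1) * (y * y) := by
            apply mul_le_mul_of_nonneg_left ?_ (by positivity)
            nlinarith
        _ = Real.Gamma y * y ^ (c + 1) := by rw [← i4, ← i3]; ring
        _ ≤ Real.Gamma (y + c) * ((y + s) ^ (1 - s) * y ^ s) := hE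
    have hsc : s ≤ c := by rw [hcs]; linarith [Nat.cast_nonneg (α := ℝ) n]
    nlinarith [key, mul_le_mul_of_nonneg_right hsc
      (by positivity : (0:ℝ) ≤ Real.Gamma y * y ^ (c - 1))]
  have hlow2 : Real.Gamma y * y ^ c / 2 ≤ Real.Gamma (y + c) := by
    apply le_of_mul_le_mul_right ?_ hT
    calc Real.Gamma y * y ^ c / 2 * ((y + s) ^ (1 - s) * y ^ s)
        ≤ Real.Gamma y * y ^ c / 2 * (y + s) := by
          apply mul_le_mul_of_nonneg_left hT2 (by positivity)
      _ ≤ Real.Gamma y * y ^ c / 2 * (2 * y) := by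
          apply mul_le_mul_of_nonneg_left (by linarith) (by positivity)
      _ = Real.Gamma y * y ^ (c + 1) := by rw [← i4]; ring
      _ ≤ _ := hE
  refine ⟨?_, hlow2⟩
  rw [abs_sub_le_iff]
  constructor
  · calc Real.Gamma (y + c) - Real.Gamma y * y ^ c
        ≤ ((n : ℝ) * c * (1 + c) ^ n) * (Real.Gamma y * y ^ (c - 1)) := hupper
      _ ≤ _ := by
          have : (0:ℝ) ≤ c * (Real.Gamma y * y ^ (c - 1)) := by positivity
          linarith
  · calc Real.Gamma y * y ^ c - Real.Gamma (y + c)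
        ≤ c * (Real.Gamma y * y ^ (c - 1)) := hlow1
      _ ≤ _ := by
          have : (0:ℝ) ≤ (n : ℝ) * c * (1 + c) ^ n * (Real.Gamma y * y ^ (c - 1)) := by positivity
          linarith

/-- Ratio asymptotics for the Gamma function: `Γ(x+a)/Γ(x+b) = x^{a−b}(1 + O(1/x))`. -/
theorem gamma_ratio_asymptotic (a b : ℝ) (ha : 0 ≤ a) (hb : 0 ≤ b) :
    ∃ C : ℝ, ∀ x : ℝ, 1 ≤ x →
      |Real.Gamma (x + a) / Real.Gamma (x + b) - x ^ (a - b)| ≤ C * x ^ (a - b - 1) := by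
  obtain ⟨Ka, hKa, ha'⟩ := gamma_shift_bound a ha
  obtain ⟨Kb, hKb, hb'⟩ := gamma_shift_bound b hb
  refine ⟨2 * (Ka + Kb), fun x hx => ?_⟩
  have hx0 : (0 : ℝ) < x := lt_of_lt_of_le one_pos hx
  obtain ⟨hA, hA2⟩ := ha' x hx
  obtain ⟨hB, hB2⟩ := hb' x hx
  set G := Real.Gamma x with hG
  have Gpos : 0 < G := Real.Gamma_pos_of_pos hx0
  have hBpos : 0 < Real.Gamma (x + b) := Real.Gamma_pos_of_pos (by linarith)
  have hxb : (0 : ℝ) < G * x ^ b / 2 := by positivity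
  have j1 : x ^ (a - b) * x ^ b = x ^ a := by
    rw [← Real.rpow_add hx0]; ring_nf
  have j2 : x ^ (a - b) * x ^ (b - 1) = x ^ (a - 1) := by
    rw [← Real.rpow_add hx0]; congr 1; ring
  have hnum : |Real.Gamma (x + a) - x ^ (a - b) * Real.Gamma (x + b)|
      ≤ (Ka + Kb) * (G * x ^ (a - 1)) := by
    have e : Real.Gamma (x + a) - x ^ (a - b) * Real.Gamma (x + b)
        = (Real.Gamma (x + a) - G * x ^ a)
          - x ^ (a - b) * (Real.Gamma (x + b) - G * x ^ b) := by
      have e1 : x ^ (a - b) * (G * x ^ b) = G * x ^ a := by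
        rw [show x ^ (a - b) * (G * x ^ b) = G * (x ^ (a - b) * x ^ b) by ring, j1]
      rw [mul_sub, e1]; ring
    rw [e]
    calc |(Real.Gamma (x + a) - G * x ^ a)
          - x ^ (a - b) * (Real.Gamma (x + b) - G * x ^ b)|
        ≤ |Real.Gamma (x + a) - G * x ^ a|
          + |x ^ (a - b) * (Real.Gamma (x + b) - G * x ^ b)| := abs_sub _ _
      _ ≤ Ka * (G * x ^ (a - 1)) + x ^ (a - b) * (Kb * (G * x ^ (b - 1))) := by
          have h1 : |x ^ (a - b) * (Real.Gamma (x + b) - G * x ^ b)|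
              = x ^ (a - b) * |Real.Gamma (x + b) - G * x ^ b| := by
            rw [abs_mul, abs_of_pos (Real.rpow_pos_of_pos hx0 _)]
          rw [h1]
          exact add_le_add hA (mul_le_mul_of_nonneg_left hB (Real.rpow_pos_of_pos hx0 _).le)
      _ = (Ka + Kb) * (G * x ^ (a - 1)) := by
          rw [show x ^ (a - b) * (Kb * (G * x ^ (b - 1)))
            = Kb * (G * (x ^ (a - b) * x ^ (b - 1))) by ring, j2]
          ring
  have hmain : Real.Gamma (x + a) / Real.Gamma (x + b) - x ^ (a - b)
      = (Real.Gamma (x + a) - x ^ (a - b) * Real.Gamma (x + b)) / Real.Gamma (x + b) := by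
    field_simp
  rw [hmain, abs_div, abs_of_pos hBpos]
  calc |Real.Gamma (x + a) - x ^ (a - b) * Real.Gamma (x + b)| / Real.Gamma (x + b)
      ≤ ((Ka + Kb) * (G * x ^ (a - 1))) / (G * x ^ b / 2) :=
        div_le_div₀ (by positivity) hnum hxb hB2
    _ = 2 * (Ka + Kb) * x ^ (a - b - 1) := by
        have h1 : x ^ (a - b - 1) = x ^ (a - 1) / x ^ b := by
          rw [← Real.rpow_sub hx0]; congr 1; ring
        have hQ : x ^ b ≠ 0 := (Real.rpow_pos_of_pos hx0 b).ne'
        have hP : x ^ (a - 1) ≠ 0 := (Real.rpow_pos_of_pos hx0 _).ne'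
        rw [h1]
        field_simp
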